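/- Let G be a graph, I ⊆ [m], U ⊆ V(G) with |I| ≥ χ(G[U]), i* ∈ [m] \ I, and v* ∈ V(G) \ U. Then the subgraph of R_m(G) induced by ([I,U]) ∪ {(i*,v*)} contains an isomorphic copy of the subgraph of G induced by U ∪ {v*} as an induced subgraph. -/

import Mathlib

open SimpleGraph

universe u
variable {V : Type u}

/-- Closed neighborhood of a vertex set. -/
def closedNbhd (G : SimpleGraph V) (U : Set V) : Set V :=
  U ∪ {v | ∃ u ∈ U, G.Adj u v}

/-- Bag `X_ℓ = N[{v_1,…,v_ℓ}] \ {v_1,…,v_{ℓ-1}}` of the enumeration `σ`. -/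
def bagX {n : ℕ} (G : SimpleGraph V) (σ : Fin n ≃ V) (ℓ : Fin n) : Set V :=
  closedNbhd G {v | ∃ j ≤ ℓ, v = σ j} \ {v | ∃ j < ℓ, v = σ j}

/-- Chromatic number of the subgraph induced by `S`. -/
noncomputable def chrom (G : SimpleGraph V) (S : Set V) : ℕ :=
  sInf {k | (G.induce S).Colorable k}

/-- Chromatic number of the path-decomposition `P_σ^G`. -/
noncomputable def decompChrom {n : ℕ} (G : SimpleGraph V) (σ : Fin n ≃ V) : ℕ :=
  sInf {k | ∀ ℓ, (G.induce (bagX G σ ℓ)).Colorable k}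

/-- `B` is a path-decomposition of `G`. -/
def IsPathDecomp (G : SimpleGraph V) {s : ℕ} (B : Fin s → Set V) : Prop :=
  (∀ v, ∃ t, v ∈ B t) ∧
  (∀ u v, G.Adj u v → ∃ t, u ∈ B t ∧ v ∈ B t) ∧
  (∀ v (t₁ t₂ t₃ : Fin s), t₁ ≤ t₂ → t₂ ≤ t₃ → v ∈ B t₁ → v ∈ B t₃ → v ∈ B t₂)

/-- Path-chromatic number. -/
noncomputable def pathChromatic (G : SimpleGraph V) : ℕ :=
  sInf {k | ∃ (s : ℕ) (B : Fin s → Set V), IsPathDecomp G B ∧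
    ∀ t, (G.induce (B t)).Colorable k}

/-- `(T, B)` is a tree-decomposition of `G`. -/
def IsTreeDecomp {ι : Type u} (G : SimpleGraph V) (T : SimpleGraph ι) (B : ι → Set V) : Prop :=
  T.IsTree ∧
  (∀ v, ∃ t, v ∈ B t) ∧
  (∀ u v, G.Adj u v → ∃ t, u ∈ B t ∧ v ∈ B t) ∧
  (∀ v, (T.induce {t | v ∈ B t}).Connected)

/-- Tree-chromatic number. -/
noncomputable def treeChromatic (G : SimpleGraph V) : ℕ :=
  sInf {k | ∃ (ι : Type u) (T : SimpleGraph ι) (B : ι → Set V),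
    IsTreeDecomp G T B ∧ ∀ t, (G.induce (B t)).Colorable k}

/-- A special enumeration. -/
def IsSpecial {n : ℕ} (G : SimpleGraph V) (σ : Fin n ≃ V) : Prop :=
  decompChrom G σ = pathChromatic G ∧
  ∀ i : Fin n, chrom G (bagX G σ i) = pathChromatic G →
    ∀ j : Fin n, j < i → ¬ G.Adj (σ j) (σ i)

/-- The graph `R_m(G)`; the vertex `(i, none)` plays the role of `(i, v₀)`. -/
def Rm (G : SimpleGraph V) (m : ℕ) : SimpleGraph (Fin m × Option V) :=
  SimpleGraph.fromRel (fun p q =>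
    (p.1 = q.1 ∧ p.2 = none) ∨
    (p.1 ≠ q.1 ∧ ∃ u v, p.2 = some u ∧ q.2 = some v ∧ G.Adj u v))

/-- `[I, U] = { (i, v) : i ∈ I, v ∈ U }` inside `R_m(G)`. -/
def box {m : ℕ} (I : Set (Fin m)) (U : Set V) : Set (Fin m × Option V) :=
  {p | p.1 ∈ I ∧ ∃ v ∈ U, p.2 = some v}

/-- Index of the first vertex in the enumeration `μ` satisfying `P`. -/
noncomputable def firstIdx {N : ℕ} {W : Type*} (μ : Fin N ≃ W) (P : W → Prop) : ℕ :=
  sInf {ℓ : ℕ | ∃ h : ℓ < N, P (μ ⟨ℓ, h⟩)}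

/-- The cycle `C_n`: `v_j ~ v_{j'}` iff `|j - j'| ∈ {1, n-1}`. -/
def cyc (n : ℕ) : SimpleGraph (Fin n) :=
  SimpleGraph.fromRel (fun a b => (b : ℕ) - (a : ℕ) = 1 ∨ (b : ℕ) - (a : ℕ) = n - 1)

/-- The Mycielskian of a graph. -/
def mycielskian (G : SimpleGraph V) : SimpleGraph (Option (V ⊕ V)) :=
  SimpleGraph.fromRel (fun a b =>
    match a, b with
    | some (Sum.inl u), some (Sum.inl v) => G.Adj u v
    | some (Sum.inr u), some (Sum.inl v) => G.Adj u v
    | none, some (Sum.inr _) => True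
    | _, _ => False)

/-- Vertex types and graphs of the Mycielski family: `MycS 2` is a single edge. -/
def MycS : ℕ → Σ W : Type, SimpleGraph W
  | 0 => ⟨Empty, ⊥⟩
  | 1 => ⟨Empty, ⊥⟩
  | 2 => ⟨Fin 2, ⊤⟩
  | (n + 3) => ⟨Option ((MycS (n + 2)).1 ⊕ (MycS (n + 2)).1), mycielskian (MycS (n + 2)).2⟩

/-- The vertex type of the `k`-Mycielski graph. -/
def MycV (k : ℕ) : Type := (MycS k).1

/-- The `k`-Mycielski graph `M_k`. -/
def Myc (k : ℕ) : SimpleGraph (MycV k) := (MycS k).2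
/-- If `|I| ≥ χ(G[U])`, `i* ∉ I` and `v* ∉ U`, then `⟨[I,U] ∪ {(i*,v*)}⟩` contains an
isomorphic copy of `⟨U ∪ {v*}⟩` as an induced subgraph. -/
theorem stmt_4 {V : Type u} [Fintype V] (G : SimpleGraph V) {m : ℕ}
    (I : Set (Fin m)) (U : Set V) (hI : chrom G U ≤ I.ncard)
    (istar : Fin m) (hi : istar ∉ I) (vstar : V) (hv : vstar ∉ U) :
    Nonempty ((G.induce (insert vstar U)) ↪g
      ((Rm G m).induce (insert (istar, some vstar) (box I U)))) := by
  classical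
  have Rm_adj : ∀ (i j : Fin m) (u w : V),
      (Rm G m).Adj (i, some u) (j, some w) ↔ i ≠ j ∧ G.Adj u w := by
    intro i j u w
    simp only [Rm, fromRel_adj]
    constructor
    · rintro ⟨-, (⟨-, h⟩ | ⟨hij, a, b, ha, hb, hab⟩) | (⟨-, h⟩ | ⟨hij, a, b, ha, hb, hab⟩)⟩
      · exact absurd h (by simp)
      · simp only [Option.some.injEq] at ha hb; subst ha; subst hb; exact ⟨hij, hab⟩
      · exact absurd h (by simp)
      · simp only [Option.some.injEq] at ha hb
        subst ha; subst hb; exact ⟨fun hh => hij hh.symm, hab.symm⟩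
    · rintro ⟨hij, hadj⟩
      exact ⟨by simp [Prod.ext_iff, hij], Or.inl (Or.inr ⟨hij, u, w, rfl, rfl, hadj⟩)⟩
  have hcol : (G.induce U).Colorable (chrom G U) :=
    Nat.sInf_mem (⟨Fintype.card U, (G.induce U).colorable_of_fintype⟩ :
      {k | (G.induce U).Colorable k}.Nonempty)
  obtain ⟨c⟩ := hcol
  have hcard : Fintype.card (Fin (chrom G U)) ≤ Fintype.card I := by
    rw [Fintype.card_fin]
    calc chrom G U ≤ I.ncard := hI
      _ = Fintype.card I := by
          rw [Set.ncard_eq_toFinset_card']; simp [Set.toFinset_card]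
  obtain ⟨f⟩ := Function.Embedding.nonempty_of_card_le hcard
  have hmemU : ∀ x (h : x ∈ U),
      (((f (c ⟨x, h⟩) : Fin m), some x) : Fin m × Option V) ∈
        insert (istar, some vstar) (box I U) :=
    fun x h => Or.inr ⟨(f (c ⟨x, h⟩)).2, x, h, rfl⟩
  have hnotstar : ∀ x (h : x ∈ U), (f (c ⟨x, h⟩) : Fin m) ≠ istar :=
    fun x h hh => hi (hh ▸ (f (c ⟨x, h⟩)).2)
  refine ⟨⟨⟨fun x => if h : (x : V) ∈ U then
      ⟨((f (c ⟨(x : V), h⟩) : Fin m), some (x : V)), hmemU _ h⟩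
    else ⟨(istar, some vstar), Set.mem_insert _ _⟩, ?_⟩, ?_⟩⟩
  · -- injectivity
    rintro ⟨x, hx⟩ ⟨y, hy⟩ hxy
    dsimp only at hxy
    by_cases h1 : x ∈ U <;> by_cases h2 : y ∈ U
    · rw [dif_pos h1, dif_pos h2] at hxy
      simp only [Subtype.mk.injEq, Prod.mk.injEq, Option.some.injEq] at hxy
      exact Subtype.ext hxy.2
    · rw [dif_pos h1, dif_neg h2] at hxy
      simp only [Subtype.mk.injEq, Prod.mk.injEq, Option.some.injEq] at hxy
      exact absurd (hxy.2 ▸ h1) hv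
    · rw [dif_neg h1, dif_pos h2] at hxy
      simp only [Subtype.mk.injEq, Prod.mk.injEq, Option.some.injEq] at hxy
      exact absurd (hxy.2 ▸ h2) hv
    · have hx' : x = vstar := by
        rcases hx with rfl | hx
        · rfl
        · exact absurd hx h1
      have hy' : y = vstar := by
        rcases hy with rfl | hy
        · rfl
        · exact absurd hy h2
      exact Subtype.ext (hx'.trans hy'.symm)
  · -- adjacency iff
    rintro ⟨x, hx⟩ ⟨y, hy⟩
    simp only [DFunLike.coe, Function.Embedding.subtype, Function.Embedding.coeFn_mk, comap_adj, Function.comp_apply,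
      Function.Embedding.coe_subtype]
    by_cases h1 : x ∈ U <;> by_cases h2 : y ∈ U
    · rw [dif_pos h1, dif_pos h2]
      rw [Rm_adj]
      refine ⟨fun h => h.2, fun hadj => ⟨fun hh => ?_, hadj⟩⟩
      exact c.valid (show (G.induce U).Adj ⟨x, h1⟩ ⟨y, h2⟩ from hadj)
        (f.injective (Subtype.ext hh))
    · rw [dif_pos h1, dif_neg h2]
      have hy' : y = vstar := by
        rcases hy with rfl | hyy
        · rfl
        · exact absurd hyy h2
      subst hy'
      rw [Rm_adj]
      exact ⟨fun h => h.2, fun hadj => ⟨hnotstar x h1, hadj⟩⟩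
    · rw [dif_neg h1, dif_pos h2]
      have hx' : x = vstar := by
        rcases hx with rfl | hxx
        · rfl
        · exact absurd hxx h1
      subst hx'
      rw [Rm_adj]
      exact ⟨fun h => h.2, fun hadj => ⟨fun hh => hnotstar y h2 hh.symm, hadj⟩⟩
    · have hx' : x = vstar := by
        rcases hx with rfl | hxx
        · rfl
        · exact absurd hxx h1
      have hy' : y = vstar := by
        rcases hy with rfl | hyy
        · rfl
        · exact absurd hyy h2
      subst hx'; subst hy'
      rw [dif_neg h1]
      exact iff_of_false (Rm G m).irrefl G.irrefl
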